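/- arXiv:2307.03540 — 4 statements merged into one kernel-verified Lean document; each statement's English description precedes it below -/
import Mathlib

section
/- In a weak brace, for every idempotent e and every element a, ρ_e(a) = a ∘ e, where ρ_b(a) = (-a + a ∘ b)⁻ ∘ a ∘ b. -/
/-- A weak brace: `(S,+)` and `(S,∘)` are inverse semigroups satisfying
`a ∘ (b + c) = a ∘ b - a + a ∘ c` and `a ∘ a⁻ = -a + a`. -/
class WeakBrace (S : Type*) where
  add : S → S → S
  mul : S → S → S
  neg : S → S
  inv : S → S
  add_assoc : ∀ a b c : S, add (add a b) c = add a (add b c)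
  mul_assoc : ∀ a b c : S, mul (mul a b) c = mul a (mul b c)
  add_reg : ∀ a : S, add (add a (neg a)) a = a
  neg_reg : ∀ a : S, add (add (neg a) a) (neg a) = neg a
  neg_unique : ∀ a x : S, add (add a x) a = a → add (add x a) x = x → x = neg a
  mul_reg : ∀ a : S, mul (mul a (inv a)) a = a
  inv_reg : ∀ a : S, mul (mul (inv a) a) (inv a) = inv a
  inv_unique : ∀ a x : S, mul (mul a x) a = a → mul (mul x a) x = x → x = inv a
  distrib : ∀ a b c : S, mul a (add b c) = add (add (mul a b) (neg a)) (mul a c)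
  link : ∀ a : S, mul a (inv a) = add (neg a) a

/-- A dual weak brace: a weak brace whose multiplicative semigroup is Clifford. -/
class DualWeakBrace (S : Type*) extends WeakBrace S where
  clifford : ∀ a : S, WeakBrace.mul a (WeakBrace.inv a) = WeakBrace.mul (WeakBrace.inv a) a

namespace WeakBrace

variable {S : Type*} [WeakBrace S]

/-- `λ_a(b) = -a + a ∘ b`. -/
def lam (a b : S) : S := add (neg a) (mul a b)

/-- `ρ_b(a) = (-a + a ∘ b)⁻ ∘ a ∘ b`. -/
def rho (b a : S) : S := mul (mul (inv (lam a b)) a) b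

/-- `a · b = -a + a ∘ b - b`. -/
def cdot (a b : S) : S := add (add (neg a) (mul a b)) (neg b)

/-- `a⁰ = a - a`. -/
def sq (a : S) : S := add a (neg a)

/-- Additive idempotent (the sets of idempotents of `+` and `∘` coincide). -/
def IsIdem (e : S) : Prop := add e e = e

/-- `[a,b]₊ = -a - b + a + b`. -/
def brkt (a b : S) : S := add (add (add (neg a) (neg b)) a) b

/-- `I` is a full inverse subsemigroup of `(S,+)`. -/
def IsFullAddSub (I : Set S) : Prop :=
  (∀ e : S, IsIdem e → e ∈ I) ∧ (∀ x ∈ I, ∀ y ∈ I, add x y ∈ I) ∧ (∀ x ∈ I, neg x ∈ I)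

/-- `I` is a normal subsemigroup of `(S,+)`. -/
def IsNormalAdd (I : Set S) : Prop :=
  IsFullAddSub I ∧ ∀ a : S, ∀ x ∈ I, add (add (neg a) x) a ∈ I

/-- `I` is a normal subsemigroup of `(S,∘)`. -/
def IsNormalMul (I : Set S) : Prop :=
  (∀ e : S, IsIdem e → e ∈ I) ∧ (∀ x ∈ I, ∀ y ∈ I, mul x y ∈ I) ∧ (∀ x ∈ I, inv x ∈ I) ∧
    ∀ a : S, ∀ x ∈ I, mul (mul (inv a) x) a ∈ I

/-- `I` is a left ideal of the weak brace `S`. -/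
def IsLeftIdeal (I : Set S) : Prop :=
  IsFullAddSub I ∧ ∀ a : S, ∀ x ∈ I, lam a x ∈ I

/-- `I` is an ideal of the weak brace `S`. -/
def IsIdeal (I : Set S) : Prop :=
  IsNormalAdd I ∧ (∀ a : S, ∀ x ∈ I, lam a x ∈ I) ∧ IsNormalMul I

/-- The socle `Soc(S)`. -/
def Soc (S : Type*) [WeakBrace S] : Set S :=
  {a | ∀ b : S, add a b = mul a b ∧ add a b = add b a}

/-- The annihilator `Ann(S)`. -/
def Ann (S : Type*) [WeakBrace S] : Set S :=
  {a | ∀ b : S, add a b = add b a ∧ add a b = mul a b ∧ mul a b = mul b a}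

/-- The congruence `a ∼_I b ⟺ a⁰ = b⁰ and -a + b ∈ I` associated to an ideal `I`. -/
def simI (I : Set S) (a b : S) : Prop := sq a = sq b ∧ add (neg a) b ∈ I

/-- Membership in the inverse subsemigroup of `(S,+)` generated by a set `X`. -/
inductive genAdd (X : Set S) : S → Prop
  | base : ∀ x ∈ X, genAdd X x
  | add : ∀ a b : S, genAdd X a → genAdd X b → genAdd X (add a b)
  | neg : ∀ a : S, genAdd X a → genAdd X (neg a)

/-- `X · Y`: the additive inverse subsemigroup generated by the elements `x · y`. -/
def cdotSet (X Y : Set S) : Set S :=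
  {s | genAdd {z | ∃ x ∈ X, ∃ y ∈ Y, z = cdot x y} s}

/-- `S^(n)` for `n ≥ 1`: `S^(1) = S`, `S^(n+1) = S^(n) · S`. -/
def Spow (S : Type*) [WeakBrace S] : ℕ → Set S
  | 0 => Set.univ
  | 1 => Set.univ
  | (n+2) => cdotSet (Spow S (n+1)) Set.univ

end WeakBrace

section Aux

private theorem isg_iv_iv {S : Type*} (op : S → S → S) (iv : S → S)
    (reg : ∀ a, op (op a (iv a)) a = a)
    (ivr : ∀ a, op (op (iv a) a) (iv a) = iv a)
    (uniq : ∀ a x, op (op a x) a = a → op (op x a) x = x → x = iv a)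
    (a : S) : iv (iv a) = a :=
  (uniq (iv a) a (ivr a) (reg a)).symm

private theorem isg_iv_idem {S : Type*} (op : S → S → S) (iv : S → S)
    (uniq : ∀ a x, op (op a x) a = a → op (op x a) x = x → x = iv a)
    {e : S} (he : op e e = e) : iv e = e :=
  (uniq e e (by rw [he]; exact he) (by rw [he]; exact he)).symm

private theorem isg_idem_mul {S : Type*} (op : S → S → S) (iv : S → S)
    (assoc : ∀ a b c, op (op a b) c = op a (op b c))
    (reg : ∀ a, op (op a (iv a)) a = a)
    (ivr : ∀ a, op (op (iv a) a) (iv a) = iv a)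
    (uniq : ∀ a x, op (op a x) a = a → op (op x a) x = x → x = iv a)
    {e f : S} (he : op e e = e) (hf : op f f = f) :
    op (op e f) (op e f) = op e f := by
  set x := iv (op e f) with hx
  have he' : ∀ z, op e (op e z) = op e z := fun z => by rw [← assoc, he]
  have hf' : ∀ z, op f (op f z) = op f z := fun z => by rw [← assoc, hf]
  have hregn : op e (op f (op x (op e f))) = op e f := by
    have h0 := reg (op e f)
    rw [← hx] at h0
    simpa only [assoc] using h0
  have hivn : op x (op e (op f x)) = x := by
    have h0 := ivr (op e f)
    rw [← hx] at h0
    simpa only [assoc] using h0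
  have hxr : ∀ z, op x (op e (op f (op x z))) = op x z := fun z => by
    have h0 := congrArg (fun t => op t z) hivn
    simpa only [assoc] using h0
  have h1 : op (op (op e f) (op (op f x) e)) (op e f) = op e f := by
    simp only [assoc, he', hf']
    exact hregn
  have h2 : op (op (op (op f x) e) (op e f)) (op (op f x) e) = op (op f x) e := by
    simp only [assoc, he', hf']
    rw [hxr]
  have hfxe : op (op f x) e = x := (uniq (op e f) (op (op f x) e) h1 h2).trans hx.symm
  have hxx : op x x = x := by
    rw [← hfxe]
    simp only [assoc, he', hf']
    rw [hxr]
  have hefx : op e f = x := by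
    have h4 : iv x = x := isg_iv_idem op iv uniq hxx
    have h5 : iv (iv (op e f)) = op e f := isg_iv_iv op iv reg ivr uniq (op e f)
    rw [← hx] at h5
    rw [h4] at h5
    exact h5.symm
  rw [hefx]; exact hxx

private theorem isg_idem_comm {S : Type*} (op : S → S → S) (iv : S → S)
    (assoc : ∀ a b c, op (op a b) c = op a (op b c))
    (reg : ∀ a, op (op a (iv a)) a = a)
    (ivr : ∀ a, op (op (iv a) a) (iv a) = iv a)
    (uniq : ∀ a x, op (op a x) a = a → op (op x a) x = x → x = iv a)
    {e f : S} (he : op e e = e) (hf : op f f = f) :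
    op e f = op f e := by
  have hef := isg_idem_mul op iv assoc reg ivr uniq he hf
  have hfe := isg_idem_mul op iv assoc reg ivr uniq hf he
  have he' : ∀ z, op e (op e z) = op e z := fun z => by rw [← assoc, he]
  have hf' : ∀ z, op f (op f z) = op f z := fun z => by rw [← assoc, hf]
  have c1 : op (op (op e f) (op f e)) (op e f) = op e f := by
    simp only [assoc, he', hf']
    simpa only [assoc] using hef
  have c2 : op (op (op f e) (op e f)) (op f e) = op f e := by
    simp only [assoc, he', hf']
    simpa only [assoc] using hfe
  have h := uniq (op e f) (op f e) c1 c2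
  rw [isg_iv_idem op iv uniq hef] at h
  exact h.symm

namespace WeakBrace

variable {S : Type*} [WeakBrace S]

private theorem neg_of_idem {e : S} (he : add e e = e) : neg e = e :=
  isg_iv_idem add neg neg_unique he

private theorem inv_of_midem {e : S} (he : mul e e = e) : inv e = e :=
  isg_iv_idem mul inv inv_unique he

private theorem add_idem_comm {e f : S} (he : add e e = e) (hf : add f f = f) :
    add e f = add f e :=
  isg_idem_comm add neg add_assoc add_reg neg_reg neg_unique he hf

private theorem mul_idem_comm {e f : S} (he : mul e e = e) (hf : mul f f = f) :
    mul e f = mul f e :=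
  isg_idem_comm mul inv mul_assoc mul_reg inv_reg inv_unique he hf

private theorem mul_idem_mul {e f : S} (he : mul e e = e) (hf : mul f f = f) :
    mul (mul e f) (mul e f) = mul e f :=
  isg_idem_mul mul inv mul_assoc mul_reg inv_reg inv_unique he hf

private theorem midem_of_idem {e : S} (he : add e e = e) : mul e e = e := by
  have hne : neg e = e := neg_of_idem he
  have h1 : mul e (inv e) = e := by rw [link, hne]; exact he
  have h3 : mul (mul e (inv e)) (mul e (inv e)) = mul e (inv e) := by
    rw [← mul_assoc, mul_reg]
  rw [h1] at h3
  exact h3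

private theorem idem_of_midem {e : S} (he : mul e e = e) : add e e = e := by
  have hie : inv e = e := inv_of_midem he
  have h1 : e = add (neg e) e := by rw [← link, hie, he]
  have h2 : add (add (neg e) e) (add (neg e) e) = add (neg e) e := by
    rw [← add_assoc, neg_reg]
  rw [← h1] at h2
  exact h2

/-- For additive idempotents, `∘` and `+` coincide. -/
private theorem mul_idem_eq_add {f g : S} (hf : add f f = f) (hg : add g g = g) :
    mul f g = add f g := by
  have hmf : mul f f = f := midem_of_idem hf
  have hmg : mul g g = g := midem_of_idem hg
  have hnf : neg f = f := neg_of_idem hf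
  have hng : neg g = g := neg_of_idem hg
  set h := mul f g with hh
  set k := add f g with hk
  have hmh : mul h h = h := mul_idem_mul hmf hmg
  have hah : add h h = h := idem_of_midem hmh
  have hak : add k k = k := by
    rw [hk, add_assoc, ← add_assoc g f g, add_idem_comm hg hf, add_assoc, hg,
      ← add_assoc, hf]
  have hmk : mul k k = k := midem_of_idem hak
  have hnk : neg k = k := neg_of_idem hak
  have hfh : add f h = h := by
    have e1 := distrib f g g
    rw [hg, hnf, ← hh] at e1
    rw [add_idem_comm hah hf, add_assoc, hah] at e1
    exact e1.symm
  have hc : mul g f = h := (mul_idem_comm hmg hmf).trans hh.symm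
  have hgh : add g h = h := by
    have e1 := distrib g f f
    rw [hf, hng, hc] at e1
    rw [add_idem_comm hah hg, add_assoc, hah] at e1
    exact e1.symm
  have hhk : add h k = h := by
    rw [hk, ← add_assoc, add_idem_comm hah hf, hfh, add_idem_comm hah hg, hgh]
  have hfk : mul f k = h := by
    have e2 := distrib f f g
    rw [hmf, hnf, ← hh, ← hk, hf, hfh] at e2
    exact e2
  have hgk : mul g k = h := by
    have e2 := distrib g f g
    rw [hc, hng, hmg, ← hk, add_assoc, hg, add_idem_comm hah hg, hgh] at e2
    exact e2
  have hkf : mul k f = h := (mul_idem_comm hmk hmf).trans hfk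
  have hkg : mul k g = h := (mul_idem_comm hmk hmg).trans hgk
  have e3 := distrib k f g
  rw [hkf, hkg, hnk, ← hk, hmk, hhk, hah] at e3
  exact e3.symm

end WeakBrace

end Aux

open WeakBrace
theorem stmt1 {S : Type*} [WeakBrace S] (e a : S) (he : IsIdem e) :
    rho e a = mul a e := by
  have he' : add e e = e := he
  set y := mul a e with hy
  set u := add (neg a) y with hu
  have hyu : add y u = y := by
    have d := distrib a e e
    rw [he', ← hy, WeakBrace.add_assoc, ← hu] at d
    exact d.symm
  have hau : add u u = u := by
    have d := distrib a e e
    rw [he', ← hy] at d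
    rw [hu, WeakBrace.add_assoc, ← WeakBrace.add_assoc y (neg a) y, ← d]
  have hmu : mul u u = u := midem_of_idem hau
  have hiu : inv u = u := inv_of_midem hmu
  set g := add (neg y) y with hg
  have hag : add g g = g := by
    rw [hg, ← WeakBrace.add_assoc, neg_reg]
  have hgu : add g u = g := by
    rw [hg, WeakBrace.add_assoc, hyu]
  have hug : add u g = g := (add_idem_comm hau hag).trans hgu
  have hmug : mul u g = g := by
    rw [mul_idem_eq_add hau hag]; exact hug
  have hlink : mul y (inv y) = g := by rw [link, ← hg]
  have hreg : mul (mul y (inv y)) y = y := mul_reg y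
  rw [hlink] at hreg
  show mul (mul (inv (lam a e)) a) e = y
  have hlam : lam a e = u := by rw [lam, ← hy, ← hu]
  rw [hlam, hiu, WeakBrace.mul_assoc, ← hy]
  calc mul u y = mul u (mul (mul y (inv y)) y) := by rw [mul_reg]
    _ = mul (mul u (mul y (inv y))) y := (WeakBrace.mul_assoc u (mul y (inv y)) y).symm
    _ = mul (mul u g) y := by rw [hlink]
    _ = mul g y := by rw [hmug]
    _ = y := hreg
end

section
/- In a dual weak brace S, for all a, b ∈ S the following are equivalent: (i) a · b is an idempotent; (ii) a · b = a⁰ + b⁰; (iii) a + b = a ∘ b. Here a · b := -a + a ∘ b - b and a⁰ := a - a. -/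
structure ISG (T : Type*) where
  op : T → T → T
  iv : T → T
  assoc : ∀ a b c : T, op (op a b) c = op a (op b c)
  reg : ∀ a : T, op (op a (iv a)) a = a
  ivreg : ∀ a : T, op (op (iv a) a) (iv a) = iv a
  uniq : ∀ a x : T, op (op a x) a = a → op (op x a) x = x → x = iv a

namespace ISG
variable {T : Type*} (I : ISG T)

theorem hcont {e : T} (he : I.op e e = e) (x : T) :
    I.op e (I.op e x) = I.op e x := by rw [← I.assoc, he]

theorem regA (a : T) : I.op a (I.op (I.iv a) a) = a := by rw [← I.assoc]; exact I.reg a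

theorem ivregA (a : T) : I.op (I.iv a) (I.op a (I.iv a)) = I.iv a := by
  rw [← I.assoc]; exact I.ivreg a

theorem regC (a x : T) : I.op a (I.op (I.iv a) (I.op a x)) = I.op a x := by
  rw [← I.assoc, ← I.assoc, I.reg]

theorem ivregC (a x : T) : I.op (I.iv a) (I.op a (I.op (I.iv a) x)) = I.op (I.iv a) x := by
  rw [← I.assoc, ← I.assoc, I.ivreg]

theorem ii (a : T) : I.iv (I.iv a) = a := (I.uniq (I.iv a) a (I.ivreg a) (I.reg a)).symm

theorem idem_iv {e : T} (he : I.op e e = e) : I.iv e = e :=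
  (I.uniq e e (by rw [he, he]) (by rw [he, he])).symm

theorem uIdem (x : T) : I.op (I.op (I.iv x) x) (I.op (I.iv x) x) = I.op (I.iv x) x := by
  rw [I.assoc, I.regA]

theorem vIdem (x : T) : I.op (I.op x (I.iv x)) (I.op x (I.iv x)) = I.op x (I.iv x) := by
  rw [I.assoc, I.ivregA]

theorem idem_cl {e f : T} (he : I.op e e = e) (hf : I.op f f = f) :
    I.op (I.op e f) (I.op e f) = I.op e f ∧ I.iv (I.op e f) = I.op e f := by
  have h1 : I.op (I.op (I.op e f) (I.op (I.op f (I.iv (I.op e f))) e)) (I.op e f) = I.op e f := by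
    have base := I.reg (I.op e f)
    simp only [I.assoc] at base ⊢
    rw [I.hcont hf, I.hcont he]
    exact base
  have key : I.op f (I.op (I.iv (I.op e f)) (I.op e (I.op f (I.op (I.iv (I.op e f)) e)))) =
      I.op f (I.op (I.iv (I.op e f)) e) := by
    have base := congrArg (fun z => I.op f (I.op z e)) (I.ivreg (I.op e f))
    simp only [I.assoc] at base
    exact base
  have h2 : I.op (I.op (I.op (I.op f (I.iv (I.op e f))) e) (I.op e f))
      (I.op (I.op f (I.iv (I.op e f))) e) = I.op (I.op f (I.iv (I.op e f))) e := by
    simp only [I.assoc]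
    rw [I.hcont he, I.hcont hf]
    exact key
  have h3 : I.op (I.op (I.op f (I.iv (I.op e f))) e) (I.op (I.op f (I.iv (I.op e f))) e) =
      I.op (I.op f (I.iv (I.op e f))) e := by
    simp only [I.assoc]
    exact key
  have hgx : I.op (I.op f (I.iv (I.op e f))) e = I.iv (I.op e f) := I.uniq _ _ h1 h2
  have hxid : I.op (I.iv (I.op e f)) (I.iv (I.op e f)) = I.iv (I.op e f) := by
    rw [← hgx]; exact h3
  have hA : I.op e f = I.iv (I.op e f) := by
    conv_lhs => rw [← I.ii (I.op e f)]
    rw [I.idem_iv hxid]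
  constructor
  · rw [hA]; exact hxid
  · exact hA.symm

theorem idem_comm {e f : T} (he : I.op e e = e) (hf : I.op f f = f) :
    I.op e f = I.op f e := by
  obtain ⟨hef, hef'⟩ := I.idem_cl he hf
  obtain ⟨hfe, _⟩ := I.idem_cl hf he
  have h1 : I.op (I.op (I.op e f) (I.op f e)) (I.op e f) = I.op e f := by
    have base := hef
    simp only [I.assoc] at base ⊢
    rw [I.hcont hf, I.hcont he]
    exact base
  have h2 : I.op (I.op (I.op f e) (I.op e f)) (I.op f e) = I.op f e := by
    have base := hfe
    simp only [I.assoc] at base ⊢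
    rw [I.hcont he, I.hcont hf]
    exact base
  have := I.uniq (I.op e f) (I.op f e) h1 h2
  rw [hef'] at this
  exact this.symm

theorem iv_op (a b : T) : I.iv (I.op a b) = I.op (I.iv b) (I.iv a) := by
  have hb1 : I.op (I.op b (I.iv b)) (I.op b (I.iv b)) = I.op b (I.iv b) := I.vIdem b
  have ha1 : I.op (I.op (I.iv a) a) (I.op (I.iv a) a) = I.op (I.iv a) a := I.uIdem a
  have hcomm := I.idem_comm hb1 ha1
  have h1 : I.op (I.op (I.op a b) (I.op (I.iv b) (I.iv a))) (I.op a b) = I.op a b := by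
    have key := congrArg (fun z => I.op a (I.op z b)) hcomm
    simp only [I.assoc] at key
    rw [I.regC, I.regA] at key
    simp only [I.assoc]
    exact key
  have h2 : I.op (I.op (I.op (I.iv b) (I.iv a)) (I.op a b)) (I.op (I.iv b) (I.iv a)) =
      I.op (I.iv b) (I.iv a) := by
    have key := congrArg (fun z => I.op (I.iv b) (I.op z (I.iv a))) hcomm.symm
    simp only [I.assoc] at key
    rw [I.ivregC, I.ivregA] at key
    simp only [I.assoc]
    exact key
  exact (I.uniq _ _ h1 h2).symm

theorem cent (cliff : ∀ a : T, I.op a (I.iv a) = I.op (I.iv a) a) {e : T}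
    (he : I.op e e = e) (x : T) : I.op e x = I.op x e := by
  have hux := I.uIdem x
  have hne : I.iv e = e := I.idem_iv he
  have hio : I.iv (I.op x e) = I.op e (I.iv x) := by rw [I.iv_op, hne]
  have A : I.op x (I.op e (I.iv x)) = I.op e (I.op (I.iv x) x) := by
    have hc := cliff (I.op x e)
    rw [hio] at hc
    have key := congrArg (I.op e ·) (I.idem_comm hux he)
    simp only [I.assoc] at hc key
    rw [I.hcont he] at hc key
    rw [key] at hc
    exact hc
  have s1 : I.op x e = I.op x (I.op (I.op (I.iv x) x) e) := by rw [← I.assoc, I.regA]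
  have s2 : I.op x (I.op (I.op (I.iv x) x) e) = I.op x (I.op e (I.op (I.iv x) x)) :=
    congrArg (I.op x) (I.idem_comm hux he)
  have s3 : I.op x (I.op e (I.op (I.iv x) x)) = I.op (I.op x (I.op e (I.iv x))) x := by
    simp only [I.assoc]
  have s5 : I.op (I.op e (I.op (I.iv x) x)) x = I.op e x := by
    rw [I.assoc, ← cliff x, I.reg]
  calc I.op e x = I.op (I.op e (I.op (I.iv x) x)) x := s5.symm
    _ = I.op (I.op x (I.op e (I.iv x))) x := by rw [A]
    _ = I.op x (I.op e (I.op (I.iv x) x)) := s3.symm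
    _ = I.op x (I.op (I.op (I.iv x) x) e) := s2.symm
    _ = I.op x e := s1.symm

end ISG

namespace WBAux
open WeakBrace

variable {S : Type*} [DualWeakBrace S]

def aI (S : Type*) [WeakBrace S] : ISG S :=
  ⟨add, neg, WeakBrace.add_assoc, WeakBrace.add_reg, WeakBrace.neg_reg, WeakBrace.neg_unique⟩
def mI (S : Type*) [WeakBrace S] : ISG S :=
  ⟨mul, inv, WeakBrace.mul_assoc, WeakBrace.mul_reg, WeakBrace.inv_reg, WeakBrace.inv_unique⟩

theorem aA (x y z : S) : add (add x y) z = add x (add y z) := WeakBrace.add_assoc x y z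
theorem mA (x y z : S) : mul (mul x y) z = mul x (mul y z) := WeakBrace.mul_assoc x y z

theorem ann (x : S) : neg (neg x) = x := (aI S).ii x
theorem inn (x : S) : inv (inv x) = x := (mI S).ii x
theorem aidem_iv {e : S} (he : add e e = e) : neg e = e := (aI S).idem_iv he
theorem midem_iv {f : S} (hf : mul f f = f) : inv f = f := (mI S).idem_iv hf
theorem acomm {e f : S} (he : add e e = e) (hf : add f f = f) : add e f = add f e :=
  (aI S).idem_comm he hf
theorem mcomm {e f : S} (he : mul e e = e) (hf : mul f f = f) : mul e f = mul f e :=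
  (mI S).idem_comm he hf
theorem aiv_op (x y : S) : neg (add x y) = add (neg y) (neg x) := (aI S).iv_op x y
theorem miv_op (x y : S) : inv (mul x y) = mul (inv y) (inv x) := (mI S).iv_op x y
theorem arA (x : S) : add x (add (neg x) x) = x := (aI S).regA x
theorem anA (x : S) : add (neg x) (add x (neg x)) = neg x := (aI S).ivregA x
theorem ahcont {e : S} (he : add e e = e) (x : S) : add e (add e x) = add e x :=
  (aI S).hcont he x
theorem mhcont {e : S} (he : mul e e = e) (x : S) : mul e (mul e x) = mul e x :=
  (mI S).hcont he x
theorem mcent {f : S} (hf : mul f f = f) (x : S) : mul f x = mul x f :=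
  (mI S).cent DualWeakBrace.clifford hf x

theorem aIdem_mIdem {e : S} (he : add e e = e) : mul e e = e := by
  have hne : neg e = e := aidem_iv he
  have h1 : mul e (inv e) = e := by rw [WeakBrace.link, hne, he]
  have h2 := WeakBrace.mul_reg e
  rw [h1] at h2
  exact h2

theorem mIdem_aIdem {f : S} (hf : mul f f = f) : add f f = f := by
  have hif : inv f = f := midem_iv hf
  have h := WeakBrace.link f
  rw [hif, hf] at h
  calc add f f = add f (add (neg f) f) := by rw [← h]
    _ = f := arA f

theorem idem_add_idem {e f : S} (he : add e e = e) (hf : add f f = f) :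
    add (add e f) (add e f) = add e f := by
  rw [aA]
  rw [show add f (add e f) = add e (add f f) by rw [← aA, acomm hf he, aA]]
  rw [hf, ahcont he]

theorem neg_mul (a b : S) :
    neg (mul a b) = add (add (neg a) (mul a (neg b))) (neg a) := by
  have h1 : add (add (mul a b) (add (add (neg a) (mul a (neg b))) (neg a))) (mul a b)
      = mul a b := by
    have d := WeakBrace.distrib a (add b (neg b)) b
    rw [WeakBrace.add_reg b, WeakBrace.distrib a b (neg b)] at d
    simp only [WeakBrace.add_assoc] at d ⊢
    exact d.symm
  have h2 : add (add (add (add (neg a) (mul a (neg b))) (neg a)) (mul a b))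
      (add (add (neg a) (mul a (neg b))) (neg a)) = add (add (neg a) (mul a (neg b))) (neg a) := by
    have d := WeakBrace.distrib a (add (neg b) b) (neg b)
    rw [WeakBrace.neg_reg b, WeakBrace.distrib a (neg b) b] at d
    have key := congrArg (fun w => add (add (neg a) w) (neg a)) d
    simp only [WeakBrace.add_assoc] at key ⊢
    exact key.symm
  exact (WeakBrace.neg_unique _ _ h1 h2).symm

theorem t_lem (a : S) : mul a (neg (inv a)) = add a a := by
  have h := neg_mul a (neg (inv a))
  rw [ann (inv a), WeakBrace.link a] at h
  rw [WeakBrace.add_assoc, WeakBrace.neg_reg] at h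
  have h2 := congrArg neg h
  rw [ann, aiv_op, ann] at h2
  exact h2

theorem u_eq (a : S) : add (neg a) a = add (neg (inv a)) (inv a) := by
  calc add (neg a) a = mul a (inv a) := (WeakBrace.link a).symm
    _ = mul (inv a) a := DualWeakBrace.clifford a
    _ = mul (inv a) (inv (inv a)) := by rw [inn]
    _ = add (neg (inv a)) (inv a) := WeakBrace.link (inv a)

theorem Rlem (a : S) : add (neg a) a = add (add (neg a) a) (add a (neg a)) := by
  have habs : add (inv a) (add (neg a) a) = inv a := by
    rw [u_eq]; exact arA (inv a)
  have s3 := WeakBrace.distrib a (inv a) (add (neg a) a)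
  rw [habs, WeakBrace.link a] at s3
  have s4 : mul a (add (neg a) a) = add (add (add a a) (neg a)) (add (neg a) a) := by
    rw [u_eq, WeakBrace.distrib, t_lem, WeakBrace.link, ← u_eq]
  have hu : add (add (neg a) a) (add (neg a) a) = add (neg a) a := by rw [WeakBrace.add_assoc, arA]
  have hv : add (add a (neg a)) (add a (neg a)) = add a (neg a) := by rw [WeakBrace.add_assoc, anA]
  calc add (neg a) a
      = add (add (add (neg a) a) (neg a)) (mul a (add (neg a) a)) := s3
    _ = add (add (add (neg a) a) (neg a)) (add (add (add a a) (neg a)) (add (neg a) a)) := by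
        rw [s4]
    _ = add (add (neg a) a) (add (neg a) (add (add (add a a) (neg a)) (add (neg a) a))) :=
        WeakBrace.add_assoc _ _ _
    _ = add (add (neg a) a) (add (neg a) (add a (add (add a (neg a)) (add (neg a) a)))) := by
        rw [WeakBrace.add_assoc (add a a), WeakBrace.add_assoc a a, ← WeakBrace.add_assoc a (neg a)]
    _ = add (add (neg a) a) (add (add (neg a) a) (add (add a (neg a)) (add (neg a) a))) := by
        rw [← WeakBrace.add_assoc (neg a) a]
    _ = add (add (add (neg a) a) (add (neg a) a)) (add (add a (neg a)) (add (neg a) a)) :=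
        (WeakBrace.add_assoc _ _ _).symm
    _ = add (add (neg a) a) (add (add a (neg a)) (add (neg a) a)) := by rw [hu]
    _ = add (add (neg a) a) (add (add (neg a) a) (add a (neg a))) := by rw [acomm hv hu]
    _ = add (add (add (neg a) a) (add (neg a) a)) (add a (neg a)) := (WeakBrace.add_assoc _ _ _).symm
    _ = add (add (neg a) a) (add a (neg a)) := by rw [hu]

theorem cliff_add (a : S) : add a (neg a) = add (neg a) a := by
  have R1 := Rlem a
  have R2 := Rlem (neg a)
  rw [ann a] at R2
  have hu : add (add (neg a) a) (add (neg a) a) = add (neg a) a := by rw [WeakBrace.add_assoc, arA]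
  have hv : add (add a (neg a)) (add a (neg a)) = add a (neg a) := by rw [WeakBrace.add_assoc, anA]
  have hc := acomm hu hv
  rw [hc] at R1
  exact R2.trans R1.symm

theorem acent {e : S} (he : add e e = e) (x : S) : add e x = add x e :=
  (aI S).cent cliff_add he x

theorem acentC {e : S} (he : add e e = e) (x y : S) :
    add e (add x y) = add x (add e y) := by
  rw [← WeakBrace.add_assoc, acent he x, WeakBrace.add_assoc]

theorem sq_def (x : S) : add x (neg x) = sq x := rfl
theorem sq_u (a : S) : sq a = add (neg a) a := cliff_add a
theorem sq_m (a : S) : sq a = mul a (inv a) := (sq_u a).trans (WeakBrace.link a).symm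
theorem sq_idem (a : S) : add (sq a) (sq a) = sq a := by
  show add (add a (neg a)) (add a (neg a)) = add a (neg a)
  rw [WeakBrace.add_assoc, anA]
theorem sq_m_idem (a : S) : mul (sq a) (sq a) = sq a := aIdem_mIdem (sq_idem a)
theorem a_sq (a : S) : add a (sq a) = a := by rw [sq_u]; exact arA a
theorem sq_a (a : S) : add (sq a) a = a := WeakBrace.add_reg a

theorem idem_mul_add {e f : S} (he : add e e = e) (hf : add f f = f) :
    mul e f = add e f := by
  have em := aIdem_mIdem he
  have fm := aIdem_mIdem hf
  have hne : neg e = e := aidem_iv he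
  have hnf : neg f = f := aidem_iv hf
  have hfe : mul f e = mul e f := mcomm fm em
  have mef : mul (mul e f) (mul e f) = mul e f := by
    have h1 : mul (mul e f) (mul e f) = mul e (mul (mul f e) f) := by
      simp only [WeakBrace.mul_assoc]
    rw [hfe] at h1
    rw [WeakBrace.mul_assoc e f f, fm, mhcont em] at h1
    exact h1
  have aef : add (mul e f) (mul e f) = mul e f := mIdem_aIdem mef
  have B1 : mul e f = add e (mul e f) := by
    have d := WeakBrace.distrib e f f
    rw [hf, hne, acomm aef he, WeakBrace.add_assoc, aef] at d
    exact d
  have B2 : mul e f = add f (mul e f) := by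
    have d := WeakBrace.distrib f e e
    rw [he, hnf, hfe, acomm aef hf, WeakBrace.add_assoc, aef] at d
    exact d
  have hg : add (add e f) (add e f) = add e f := idem_add_idem he hf
  have gm : mul (add e f) (add e f) = add e f := aIdem_mIdem hg
  have gneg : neg (add e f) = add e f := aidem_iv hg
  have ge : mul (add e f) e = mul e f := by
    rw [mcomm gm em, WeakBrace.distrib e e f, em, hne, he, ← B1]
  have gf : mul (add e f) f = mul e f := by
    rw [mcomm gm fm, WeakBrace.distrib f e f, fm, hnf, hfe]
    rw [WeakBrace.add_assoc, hf, acomm aef hf, ← B2]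
  have C : add e f = add (add e f) (mul e f) := by
    calc add e f = mul (add e f) (add e f) := gm.symm
      _ = add (add (mul (add e f) e) (neg (add e f))) (mul (add e f) f) := WeakBrace.distrib _ e f
      _ = add (add (mul e f) (add e f)) (mul e f) := by rw [ge, gf, gneg]
      _ = add (add (add e f) (mul e f)) (mul e f) := by rw [acomm aef hg]
      _ = add (add e f) (mul e f) := by rw [WeakBrace.add_assoc, aef]
  have C2 : add (add e f) (mul e f) = mul e f := by
    rw [WeakBrace.add_assoc, ← B2, ← B1]
  exact (C.trans C2).symm

theorem sq_mulab (a b : S) : sq (mul a b) = add (sq a) (sq b) := by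
  have h1 : sq (mul a b) = mul (mul a b) (mul (inv b) (inv a)) := by
    rw [sq_m (mul a b), miv_op]
  rw [h1, WeakBrace.mul_assoc, ← WeakBrace.mul_assoc b (inv b) (inv a), ← sq_m b]
  rw [mcent (sq_m_idem b) (inv a)]
  rw [← WeakBrace.mul_assoc a (inv a) (sq b), ← sq_m a]
  exact idem_mul_add (sq_idem a) (sq_idem b)

theorem sq_cdot (a b : S) : sq (cdot a b) = add (sq a) (sq b) := by
  have hneg : neg (cdot a b) = add b (add (neg (mul a b)) a) := by
    show neg (add (add (neg a) (mul a b)) (neg b)) = _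
    rw [aiv_op, aiv_op, ann b, ann a]
  show add (add (add (neg a) (mul a b)) (neg b)) (neg (cdot a b)) = add (sq a) (sq b)
  rw [hneg]
  simp only [WeakBrace.add_assoc]
  rw [← WeakBrace.add_assoc (neg b) b, ← sq_u b]
  rw [← acentC (sq_idem b) (mul a b) (add (neg (mul a b)) a)]
  rw [← WeakBrace.add_assoc (mul a b) (neg (mul a b)) a, sq_def (mul a b)]
  rw [acent (sq_idem (mul a b)) a]
  rw [acentC (sq_idem b) a (sq (mul a b))]
  rw [← WeakBrace.add_assoc (neg a) a, ← sq_u a]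
  rw [sq_mulab a b]
  rw [acentC (sq_idem b) (sq a) (sq b), sq_idem b, ahcont (sq_idem a)]

theorem sandwich (a b : S) : add a (add (cdot a b) b) = mul a b := by
  show add a (add (add (add (neg a) (mul a b)) (neg b)) b) = mul a b
  simp only [WeakBrace.add_assoc]
  rw [← sq_u b]
  rw [← acent (sq_idem b) (mul a b)]
  rw [← WeakBrace.add_assoc a (neg a), sq_def a]
  rw [← WeakBrace.add_assoc (sq a) (sq b), ← sq_mulab a b]
  exact sq_a (mul a b)

end WBAux


open WeakBrace
theorem stmt2 {S : Type*} [DualWeakBrace S] (a b : S) :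
    (IsIdem (cdot a b) ↔ cdot a b = add (sq a) (sq b)) ∧
    (cdot a b = add (sq a) (sq b) ↔ add a b = mul a b) := by
  constructor
  · constructor
    · intro h
      have h' : add (cdot a b) (cdot a b) = cdot a b := h
      have hneg : neg (cdot a b) = cdot a b := WBAux.aidem_iv h'
      have hsq : sq (cdot a b) = cdot a b := by
        show add (cdot a b) (neg (cdot a b)) = cdot a b
        rw [hneg, h']
      rw [← hsq, WBAux.sq_cdot]
    · intro h
      show add (cdot a b) (cdot a b) = cdot a b
      rw [h]
      exact WBAux.idem_add_idem (WBAux.sq_idem a) (WBAux.sq_idem b)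
  · constructor
    · intro h
      have k1 : add a (add (add (sq a) (sq b)) b) = add a b := by
        rw [WeakBrace.add_assoc (sq a) (sq b) b, WBAux.sq_a b,
          ← WeakBrace.add_assoc a (sq a) b, WBAux.a_sq a]
      calc add a b = add a (add (add (sq a) (sq b)) b) := k1.symm
        _ = add a (add (cdot a b) b) := by rw [← h]
        _ = mul a b := WBAux.sandwich a b
    · intro h
      show add (add (neg a) (mul a b)) (neg b) = add (sq a) (sq b)
      rw [← h, ← WeakBrace.add_assoc (neg a) a b, ← WBAux.sq_u a,
        WeakBrace.add_assoc (sq a) b (neg b), WBAux.sq_def b]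
end

section
/- In a dual weak brace S, for every a ∈ S and every idempotent e, a · e = e · a and a · e is an idempotent, where a · b := -a + a ∘ b - b. -/
/-- Bundled inverse-semigroup axioms for a binary operation with inversion. -/
structure InvSg {S : Type*} (op : S → S → S) (iv : S → S) : Prop where
  assoc : ∀ a b c : S, op (op a b) c = op a (op b c)
  reg : ∀ a : S, op (op a (iv a)) a = a
  reg' : ∀ a : S, op (op (iv a) a) (iv a) = iv a
  uniq : ∀ a x : S, op (op a x) a = a → op (op x a) x = x → x = iv a

namespace InvSg

variable {S : Type*} {op : S → S → S} {iv : S → S}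

local infixl:65 " ⬝ " => op

variable (h : InvSg op iv)
include h

theorem iv_iv (a : S) : iv (iv a) = a := (h.uniq (iv a) a (h.reg' a) (h.reg a)).symm

theorem idem_iv {a : S} (ha : a ⬝ a = a) : iv a = a :=
  (h.uniq a a (by rw [ha, ha]) (by rw [ha, ha])).symm

theorem sq_idem (a : S) : (a ⬝ iv a) ⬝ (a ⬝ iv a) = a ⬝ iv a := by
  rw [← h.assoc (a ⬝ iv a) a (iv a), h.reg]

theorem pi_idem (a : S) : (iv a ⬝ a) ⬝ (iv a ⬝ a) = iv a ⬝ a := by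
  rw [← h.assoc (iv a ⬝ a) (iv a) a, h.reg']

theorem idem_op_self {e f : S} (he : e ⬝ e = e) (hf : f ⬝ f = f) :
    (e ⬝ f) ⬝ (e ⬝ f) = e ⬝ f ∧ iv (e ⬝ f) = e ⬝ f := by
  have heL : ∀ X : S, e ⬝ (e ⬝ X) = e ⬝ X := fun X => by rw [← h.assoc, he]
  have hfL : ∀ X : S, f ⬝ (f ⬝ X) = f ⬝ X := fun X => by rw [← h.assoc, hf]
  have key : f ⬝ (iv (e ⬝ f) ⬝ e) = iv (e ⬝ f) := by
    apply h.uniq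
    · have hr := h.reg (e ⬝ f)
      simp only [h.assoc] at hr ⊢
      rw [hfL, heL]
      exact hr
    · have hr := h.reg' (e ⬝ f)
      simp only [h.assoc] at hr ⊢
      rw [heL, hfL]
      -- goal : f ⬝ (iv (e⬝f) ⬝ (e ⬝ (f ⬝ (iv (e⬝f) ⬝ e)))) = f ⬝ (iv (e⬝f) ⬝ e)
      -- hr : iv (e⬝f) ⬝ (e ⬝ (f ⬝ iv (e⬝f))) = iv (e⬝f)
      have hr2 : ∀ X : S, iv (e ⬝ f) ⬝ (e ⬝ (f ⬝ (iv (e ⬝ f) ⬝ X))) = iv (e ⬝ f) ⬝ X := by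
        intro X
        have := congrArg (fun y => y ⬝ X) hr
        simpa only [h.assoc] using this
      rw [hr2]
  have hxx : iv (e ⬝ f) ⬝ iv (e ⬝ f) = iv (e ⬝ f) := by
    have hr := h.reg' (e ⬝ f)
    have hr2 : ∀ X : S, iv (e ⬝ f) ⬝ (e ⬝ (f ⬝ (iv (e ⬝ f) ⬝ X))) = iv (e ⬝ f) ⬝ X := by
      intro X
      have := congrArg (fun y => y ⬝ X) hr
      simpa only [h.assoc] using this
    conv_lhs => rw [← key]
    calc (f ⬝ (iv (e ⬝ f) ⬝ e)) ⬝ (f ⬝ (iv (e ⬝ f) ⬝ e))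
        = f ⬝ (iv (e ⬝ f) ⬝ (e ⬝ (f ⬝ (iv (e ⬝ f) ⬝ e)))) := by simp only [h.assoc]
      _ = f ⬝ (iv (e ⬝ f) ⬝ e) := by rw [hr2]
      _ = iv (e ⬝ f) := key
  have hef : e ⬝ f = iv (e ⬝ f) := by
    have h1 : iv (iv (e ⬝ f)) = iv (e ⬝ f) := h.idem_iv hxx
    rw [h.iv_iv] at h1
    exact h1
  refine ⟨?_, hef.symm⟩
  rw [← hef] at hxx
  exact hxx

theorem idem_op {e f : S} (he : e ⬝ e = e) (hf : f ⬝ f = f) :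
    (e ⬝ f) ⬝ (e ⬝ f) = e ⬝ f := (h.idem_op_self he hf).1

theorem idem_comm {e f : S} (he : e ⬝ e = e) (hf : f ⬝ f = f) : e ⬝ f = f ⬝ e := by
  obtain ⟨hef, hef'⟩ := h.idem_op_self he hf
  obtain ⟨hfe, hfe'⟩ := h.idem_op_self hf he
  have heL : ∀ X : S, e ⬝ (e ⬝ X) = e ⬝ X := fun X => by rw [← h.assoc, he]
  have hfL : ∀ X : S, f ⬝ (f ⬝ X) = f ⬝ X := fun X => by rw [← h.assoc, hf]
  have : f ⬝ e = iv (e ⬝ f) := by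
    apply h.uniq
    · -- ((e⬝f)⬝(f⬝e))⬝(e⬝f) = e⬝f
      have := hef
      simp only [h.assoc] at this ⊢
      rw [hfL, heL]
      exact this
    · have := hfe
      simp only [h.assoc] at this ⊢
      rw [heL, hfL]
      exact this
  rw [this, hef']

theorem iv_op (a b : S) : iv (a ⬝ b) = iv b ⬝ iv a := by
  have hc : (b ⬝ iv b) ⬝ (iv a ⬝ a) = (iv a ⬝ a) ⬝ (b ⬝ iv b) :=
    h.idem_comm (h.sq_idem b) (h.pi_idem a)
  symm
  apply h.uniq
  · -- ((a⬝b)⬝(iv b⬝iv a))⬝(a⬝b) = a⬝b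
    calc ((a ⬝ b) ⬝ (iv b ⬝ iv a)) ⬝ (a ⬝ b)
        = a ⬝ (((b ⬝ iv b) ⬝ (iv a ⬝ a)) ⬝ b) := by simp only [h.assoc]
      _ = a ⬝ (((iv a ⬝ a) ⬝ (b ⬝ iv b)) ⬝ b) := by rw [hc]
      _ = ((a ⬝ iv a) ⬝ a) ⬝ ((b ⬝ iv b) ⬝ b) := by simp only [h.assoc]
      _ = a ⬝ b := by rw [h.reg, h.reg]
  · calc ((iv b ⬝ iv a) ⬝ (a ⬝ b)) ⬝ (iv b ⬝ iv a)
        = iv b ⬝ (((iv a ⬝ a) ⬝ (b ⬝ iv b)) ⬝ iv a) := by simp only [h.assoc]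
      _ = iv b ⬝ (((b ⬝ iv b) ⬝ (iv a ⬝ a)) ⬝ iv a) := by rw [← hc]
      _ = ((iv b ⬝ b) ⬝ iv b) ⬝ ((iv a ⬝ a) ⬝ iv a) := by simp only [h.assoc]
      _ = iv b ⬝ iv a := by rw [h.reg', h.reg']

end InvSg

namespace DWBAux

open WeakBrace

variable {S : Type*} [DualWeakBrace S]

local infixl:65 " ⊹ " => (WeakBrace.add : S → S → S)
local infixl:70 " ⍟ " => (WeakBrace.mul : S → S → S)

theorem addSg : InvSg (WeakBrace.add : S → S → S) WeakBrace.neg :=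
  ⟨WeakBrace.add_assoc, WeakBrace.add_reg, WeakBrace.neg_reg, WeakBrace.neg_unique⟩

theorem mulSg : InvSg (WeakBrace.mul : S → S → S) WeakBrace.inv :=
  ⟨WeakBrace.mul_assoc, WeakBrace.mul_reg, WeakBrace.inv_reg, WeakBrace.inv_unique⟩

theorem addA : ∀ a b c : S, (a ⊹ b) ⊹ c = a ⊹ (b ⊹ c) := WeakBrace.add_assoc
theorem mulA : ∀ a b c : S, (a ⍟ b) ⍟ c = a ⍟ (b ⍟ c) := WeakBrace.mul_assoc

theorem neg_neg' (a : S) : neg (neg a) = a := addSg.iv_iv a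
theorem inv_inv' (a : S) : inv (inv a) = a := mulSg.iv_iv a
theorem idem_neg {e : S} (he : e ⊹ e = e) : neg e = e := addSg.idem_iv he
theorem idem_add_comm {e f : S} (he : e ⊹ e = e) (hf : f ⊹ f = f) : e ⊹ f = f ⊹ e :=
  addSg.idem_comm he hf
theorem idem_mul_comm {e f : S} (he : e ⍟ e = e) (hf : f ⍟ f = f) : e ⍟ f = f ⍟ e :=
  mulSg.idem_comm he hf
theorem neg_add' (a b : S) : neg (a ⊹ b) = neg b ⊹ neg a := addSg.iv_op a b
theorem inv_mul' (a b : S) : inv (a ⍟ b) = inv b ⍟ inv a := mulSg.iv_op a b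
theorem sq_idem' (a : S) : (a ⊹ neg a) ⊹ (a ⊹ neg a) = a ⊹ neg a := addSg.sq_idem a
theorem pi_idem' (a : S) : (neg a ⊹ a) ⊹ (neg a ⊹ a) = neg a ⊹ a := addSg.pi_idem a
theorem msq_idem (a : S) : (a ⍟ inv a) ⍟ (a ⍟ inv a) = a ⍟ inv a := mulSg.sq_idem a

theorem clif (a : S) : a ⍟ inv a = inv a ⍟ a := DualWeakBrace.clifford a

theorem pi_inv (a : S) : neg (inv a) ⊹ inv a = neg a ⊹ a := by
  rw [← WeakBrace.link (inv a), inv_inv', ← clif, WeakBrace.link]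

theorem idem_bridge {e : S} (he : e ⊹ e = e) : e ⍟ e = e := by
  have hne : neg e = e := idem_neg he
  have h1 : e ⍟ inv e = e := by rw [WeakBrace.link, hne, he]
  have h2 := WeakBrace.mul_reg e
  rwa [h1] at h2

theorem idem_inv' {e : S} (he : e ⊹ e = e) : inv e = e := mulSg.idem_iv (idem_bridge he)

theorem idem_bridge' {e : S} (he : e ⍟ e = e) : e ⊹ e = e := by
  have hie : inv e = e := mulSg.idem_iv he
  have h1 : e = neg e ⊹ e := by
    have := WeakBrace.link e
    rwa [hie, he] at this
  calc e ⊹ e = (neg e ⊹ e) ⊹ (neg e ⊹ e) := by rw [← h1]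
    _ = neg e ⊹ e := pi_idem' e
    _ = e := h1.symm

theorem lam_hom (a b c : S) :
    neg a ⊹ a ⍟ (b ⊹ c) = (neg a ⊹ a ⍟ b) ⊹ (neg a ⊹ a ⍟ c) := by
  rw [WeakBrace.distrib]
  simp only [addA]

theorem lam_neg (a b : S) : neg a ⊹ a ⍟ neg b = neg (neg a ⊹ a ⍟ b) := by
  apply addSg.uniq
  · rw [← lam_hom, ← lam_hom, WeakBrace.add_reg]
  · rw [← lam_hom, ← lam_hom, WeakBrace.neg_reg]

theorem mul_central {e : S} (he : e ⍟ e = e) (x : S) : x ⍟ e = e ⍟ x := by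
  have hie : inv e = e := mulSg.idem_iv he
  have hA : (x ⍟ inv x) ⍟ (x ⍟ inv x) = x ⍟ inv x := msq_idem x
  have hcomm : e ⍟ (x ⍟ inv x) = (x ⍟ inv x) ⍟ e := idem_mul_comm he hA
  have hcy := clif (e ⍟ x)
  rw [inv_mul', hie] at hcy
  -- hcy : (e⍟x) ⍟ (inv x ⍟ e) = (inv x ⍟ e) ⍟ (e ⍟ x)
  have hl : (e ⍟ x) ⍟ (inv x ⍟ e) = (x ⍟ inv x) ⍟ e := by
    calc (e ⍟ x) ⍟ (inv x ⍟ e) = (e ⍟ (x ⍟ inv x)) ⍟ e := by simp only [mulA]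
      _ = ((x ⍟ inv x) ⍟ e) ⍟ e := by rw [hcomm]
      _ = (x ⍟ inv x) ⍟ (e ⍟ e) := by rw [mulA]
      _ = (x ⍟ inv x) ⍟ e := by rw [he]
  have hr : (inv x ⍟ e) ⍟ (e ⍟ x) = inv x ⍟ (e ⍟ x) := by
    rw [mulA (inv x) e (e ⍟ x), ← mulA e e x, he]
  rw [hl, hr] at hcy
  -- hcy : (x ⍟ inv x) ⍟ e = inv x ⍟ (e ⍟ x)
  have hxA : x ⍟ (x ⍟ inv x) = x := by
    rw [clif x, ← mulA, WeakBrace.mul_reg]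
  symm
  calc e ⍟ x = e ⍟ ((x ⍟ inv x) ⍟ x) := by rw [WeakBrace.mul_reg]
    _ = ((x ⍟ inv x) ⍟ e) ⍟ x := by rw [← mulA, hcomm]
    _ = x ⍟ (inv x ⍟ (e ⍟ x)) := by simp only [mulA]
    _ = x ⍟ ((x ⍟ inv x) ⍟ e) := by rw [← hcy]
    _ = (x ⍟ (x ⍟ inv x)) ⍟ e := by rw [← mulA]
    _ = x ⍟ e := by rw [hxA]


theorem W1 (a : S) : (neg a ⊹ a) ⊹ (inv a ⊹ neg (inv a)) = neg a ⊹ a := by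
  have hf : (neg a ⊹ a) ⊹ (neg a ⊹ a) = neg a ⊹ a := pi_idem' a
  have hnf : neg (neg a ⊹ a) = neg a ⊹ a := idem_neg hf
  -- inv a ⍟ (a ⍟ inv a) = inv a
  have h1 : inv a ⍟ (a ⍟ inv a) = inv a := by rw [← mulA, WeakBrace.inv_reg]
  -- λ_{a⁻}(f) = f  where f = neg a ⊹ a = a ⍟ inv a
  have h3 : neg (inv a) ⊹ inv a ⍟ (neg a ⊹ a) = neg a ⊹ a := by
    rw [← WeakBrace.link a, h1, pi_inv, WeakBrace.link]
  have h4 : neg (inv a) ⊹ inv a ⍟ (neg a ⊹ a)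
      = (neg (inv a) ⊹ inv a ⍟ neg a) ⊹ (neg (inv a) ⊹ inv a ⍟ a) := lam_hom _ _ _
  have h5 : neg (inv a) ⊹ inv a ⍟ neg a = neg (neg (inv a) ⊹ inv a ⍟ a) := lam_neg _ _
  have h6 : inv a ⍟ a = neg a ⊹ a := by rw [← clif, WeakBrace.link]
  rw [h3, h5, h6] at h4
  -- h4 : neg a ⊹ a = neg (neg (inv a) ⊹ (neg a ⊹ a)) ⊹ (neg (inv a) ⊹ (neg a ⊹ a))
  rw [neg_add', hnf, neg_neg'] at h4
  -- h4 : neg a ⊹ a = ((neg a ⊹ a) ⊹ inv a) ⊹ (neg (inv a) ⊹ (neg a ⊹ a))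
  have hg : (inv a ⊹ neg (inv a)) ⊹ (inv a ⊹ neg (inv a)) = inv a ⊹ neg (inv a) :=
    sq_idem' (inv a)
  have hc : (inv a ⊹ neg (inv a)) ⊹ (neg a ⊹ a) = (neg a ⊹ a) ⊹ (inv a ⊹ neg (inv a)) :=
    idem_add_comm hg hf
  calc (neg a ⊹ a) ⊹ (inv a ⊹ neg (inv a))
      = ((neg a ⊹ a) ⊹ (neg a ⊹ a)) ⊹ (inv a ⊹ neg (inv a)) := by rw [hf]
    _ = (neg a ⊹ a) ⊹ ((inv a ⊹ neg (inv a)) ⊹ (neg a ⊹ a)) := by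
        rw [addA, ← hc]
    _ = ((neg a ⊹ a) ⊹ inv a) ⊹ (neg (inv a) ⊹ (neg a ⊹ a)) := by simp only [addA]
    _ = neg a ⊹ a := h4.symm

theorem CR1 (a : S) : (neg a ⊹ a) ⊹ (a ⊹ neg a) = neg a ⊹ a := by
  have h := W1 (inv a)
  rwa [inv_inv', pi_inv] at h

theorem plus_clifford (a : S) : a ⊹ neg a = neg a ⊹ a := by
  have h1 := CR1 a
  have h2 := CR1 (neg a)
  rw [neg_neg'] at h2
  have h3 : (neg a ⊹ a) ⊹ (a ⊹ neg a) = (a ⊹ neg a) ⊹ (neg a ⊹ a) :=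
    idem_add_comm (pi_idem' a) (sq_idem' a)
  rw [h1, h2] at h3
  exact h3.symm

theorem add_sq_self (x : S) : x ⊹ (x ⊹ neg x) = x := by
  rw [plus_clifford, ← addA, WeakBrace.add_reg]

theorem add_central {e : S} (he : e ⊹ e = e) (x : S) : e ⊹ x = x ⊹ e := by
  have hne : neg e = e := idem_neg he
  have hsq : (x ⊹ neg x) ⊹ (x ⊹ neg x) = x ⊹ neg x := sq_idem' x
  have hcm : e ⊹ (x ⊹ neg x) = (x ⊹ neg x) ⊹ e := idem_add_comm he hsq
  have star : neg x ⊹ (e ⊹ x) = (x ⊹ neg x) ⊹ e := by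
    have h1 := plus_clifford (e ⊹ x)
    rw [neg_add', hne] at h1
    -- h1 : (e ⊹ x) ⊹ (neg x ⊹ e) = (neg x ⊹ e) ⊹ (e ⊹ x)
    have hL : (e ⊹ x) ⊹ (neg x ⊹ e) = (x ⊹ neg x) ⊹ e := by
      calc (e ⊹ x) ⊹ (neg x ⊹ e) = (e ⊹ (x ⊹ neg x)) ⊹ e := by simp only [addA]
        _ = ((x ⊹ neg x) ⊹ e) ⊹ e := by rw [hcm]
        _ = (x ⊹ neg x) ⊹ (e ⊹ e) := by rw [addA]
        _ = (x ⊹ neg x) ⊹ e := by rw [he]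
    have hR : (neg x ⊹ e) ⊹ (e ⊹ x) = neg x ⊹ (e ⊹ x) := by
      rw [addA (neg x) e (e ⊹ x), ← addA e e x, he]
    rw [hL, hR] at h1
    exact h1.symm
  calc e ⊹ x = e ⊹ ((x ⊹ neg x) ⊹ x) := by rw [WeakBrace.add_reg]
    _ = ((x ⊹ neg x) ⊹ e) ⊹ x := by rw [← addA, hcm]
    _ = x ⊹ (neg x ⊹ (e ⊹ x)) := by simp only [addA]
    _ = x ⊹ ((x ⊹ neg x) ⊹ e) := by rw [star]
    _ = (x ⊹ (x ⊹ neg x)) ⊹ e := by rw [← addA]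
    _ = x ⊹ e := by rw [add_sq_self]


theorem idem_mul_idem {e f : S} (he : e ⊹ e = e) (hf : f ⊹ f = f) :
    (f ⍟ e) ⍟ (f ⍟ e) = f ⍟ e := by
  have hem : e ⍟ e = e := idem_bridge he
  have hfm : f ⍟ f = f := idem_bridge hf
  calc (f ⍟ e) ⍟ (f ⍟ e) = f ⍟ ((e ⍟ f) ⍟ e) := by simp only [mulA]
    _ = f ⍟ ((f ⍟ e) ⍟ e) := by rw [idem_mul_comm hem hfm]
    _ = (f ⍟ f) ⍟ (e ⍟ e) := by simp only [mulA]
    _ = f ⍟ e := by rw [hem, hfm]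

theorem step1 {e f : S} (he : e ⊹ e = e) (hf : f ⊹ f = f) : (f ⍟ e) ⊹ f = f ⍟ e := by
  have hadd : (f ⍟ e) ⊹ (f ⍟ e) = f ⍟ e := idem_bridge' (idem_mul_idem he hf)
  have hd := WeakBrace.distrib f e e
  rw [he, idem_neg hf] at hd
  -- hd : f ⍟ e = ((f ⍟ e) ⊹ f) ⊹ (f ⍟ e)
  have hc : f ⊹ (f ⍟ e) = (f ⍟ e) ⊹ f := idem_add_comm hf hadd
  rw [addA, hc, ← addA, hadd] at hd
  exact hd.symm

theorem step2 {e f : S} (he : e ⊹ e = e) (hf : f ⊹ f = f) : (f ⍟ e) ⊹ e = f ⍟ e := by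
  have h := step1 hf he
  rwa [idem_mul_comm (idem_bridge he) (idem_bridge hf)] at h

theorem le_mul {p q : S} (hp : p ⊹ p = p) (hq : q ⊹ q = q) (hpq : p ⊹ q = p) :
    p ⍟ q = p := by
  have hB := WeakBrace.distrib p p q
  rw [hpq, idem_bridge hp, idem_neg hp, hp] at hB
  -- hB : p = p ⊹ (p ⍟ q)
  have hC := step1 hq hp    -- (p ⍟ q) ⊹ p = p ⍟ q
  have hcm : p ⊹ (p ⍟ q) = (p ⍟ q) ⊹ p :=
    idem_add_comm hp (idem_bridge' (idem_mul_idem hq hp))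
  rw [hcm, hC] at hB
  exact hB.symm

theorem idem_mul_add {e f : S} (he : e ⊹ e = e) (hf : f ⊹ f = f) : f ⍟ e = f ⊹ e := by
  have hpi : (f ⊹ e) ⊹ (f ⊹ e) = f ⊹ e := by
    calc (f ⊹ e) ⊹ (f ⊹ e) = f ⊹ ((e ⊹ f) ⊹ e) := by simp only [addA]
      _ = f ⊹ ((f ⊹ e) ⊹ e) := by rw [idem_add_comm he hf]
      _ = (f ⊹ f) ⊹ (e ⊹ e) := by simp only [addA]
      _ = f ⊹ e := by rw [he, hf]
  have hpe : (f ⊹ e) ⊹ e = f ⊹ e := by rw [addA, he]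
  have hpf : (f ⊹ e) ⊹ f = f ⊹ e := by
    calc (f ⊹ e) ⊹ f = f ⊹ (e ⊹ f) := by rw [addA]
      _ = f ⊹ (f ⊹ e) := by rw [idem_add_comm he hf]
      _ = (f ⊹ f) ⊹ e := by rw [addA]
      _ = f ⊹ e := by rw [hf]
  have hfe_add : (f ⍟ e) ⊹ (f ⍟ e) = f ⍟ e := idem_bridge' (idem_mul_idem he hf)
  have hDe : (f ⊹ e) ⍟ e = f ⊹ e := le_mul hpi he hpe
  have hDf : (f ⊹ e) ⍟ f = f ⊹ e := le_mul hpi hf hpf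
  have hE : (f ⊹ e) ⍟ (f ⍟ e) = f ⊹ e := by rw [← mulA, hDf, hDe]
  have hF : (f ⊹ e) ⊹ (f ⍟ e) = f ⊹ e := by
    have h := step2 hfe_add hpi   -- ((f⊹e) ⍟ (f⍟e)) ⊹ (f⍟e) = (f⊹e) ⍟ (f⍟e)
    rwa [hE] at h
  have hA2 : (f ⍟ e) ⊹ (f ⊹ e) = f ⍟ e := by
    rw [← addA, step1 he hf, step2 he hf]
  have h := idem_add_comm hfe_add hpi  -- (f⍟e) ⊹ (f⊹e) = (f⊹e) ⊹ (f⍟e)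
  rw [hA2, hF] at h
  exact h


theorem mul_idem_eq_add {e : S} (he : e ⊹ e = e) (a : S) : a ⍟ e = a ⊹ e := by
  have hne : neg e = e := idem_neg he
  have hee : e ⍟ e = e := idem_bridge he
  have hie : inv e = e := idem_inv' he
  have hf : (neg a ⊹ a) ⊹ (neg a ⊹ a) = neg a ⊹ a := pi_idem' a
  -- IV : a⍟e = (a⍟e) ⊹ (neg a ⊹ (a⍟e))
  have hIV : a ⍟ e = (a ⍟ e) ⊹ (neg a ⊹ (a ⍟ e)) := by
    have h := WeakBrace.distrib a e e
    rw [he, addA] at h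
    exact h
  have hlam_idem : (neg a ⊹ (a ⍟ e)) ⊹ (neg a ⊹ (a ⍟ e)) = neg a ⊹ (a ⍟ e) := by
    rw [addA, ← hIV]
  -- πu = (neg a ⊹ a) ⊹ e
  have hpiu : neg (a ⍟ e) ⊹ (a ⍟ e) = (neg a ⊹ a) ⊹ e := by
    have h1 := WeakBrace.link (a ⍟ e)
    rw [inv_mul', hie] at h1
    -- h1 : (a ⍟ e) ⍟ (e ⍟ inv a) = neg (a⍟e) ⊹ (a⍟e)
    rw [← h1]
    calc (a ⍟ e) ⍟ (e ⍟ inv a) = a ⍟ ((e ⍟ e) ⍟ inv a) := by simp only [mulA]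
      _ = a ⍟ (e ⍟ inv a) := by rw [hee]
      _ = a ⍟ (inv a ⍟ e) := by rw [← mul_central hee (inv a)]
      _ = (a ⍟ inv a) ⍟ e := by rw [← mulA]
      _ = (neg a ⊹ a) ⍟ e := by rw [WeakBrace.link]
      _ = (neg a ⊹ a) ⊹ e := idem_mul_add he hf
  -- λ = πu
  have hlam : neg a ⊹ (a ⍟ e) = (neg a ⊹ a) ⊹ e := by
    have hpid : (neg (a ⍟ e) ⊹ (a ⍟ e)) ⊹ (neg (a ⍟ e) ⊹ (a ⍟ e)) = neg (a ⍟ e) ⊹ (a ⍟ e) :=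
      pi_idem' (a ⍟ e)
    have c1 : (neg a ⊹ (a ⍟ e)) ⊹ (neg (a ⍟ e) ⊹ (a ⍟ e)) = neg a ⊹ (a ⍟ e) := by
      rw [addA, ← addA (a ⍟ e), WeakBrace.add_reg]
    have c2 : (neg (a ⍟ e) ⊹ (a ⍟ e)) ⊹ (neg a ⊹ (a ⍟ e)) = neg (a ⍟ e) ⊹ (a ⍟ e) := by
      rw [addA, ← hIV]
    have c3 := idem_add_comm hlam_idem hpid
    rw [c1, c2] at c3
    rw [c3, hpiu]
  -- u ⊹ πu = u,  hence  u ⊹ f = u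
  have hX : (a ⍟ e) ⊹ ((neg a ⊹ a) ⊹ e) = a ⍟ e := by
    rw [← hpiu, ← addA, WeakBrace.add_reg]
  have huf : (a ⍟ e) ⊹ (neg a ⊹ a) = a ⍟ e := by
    calc (a ⍟ e) ⊹ (neg a ⊹ a)
        = ((a ⍟ e) ⊹ ((neg a ⊹ a) ⊹ e)) ⊹ (neg a ⊹ a) := by rw [hX]
      _ = (a ⍟ e) ⊹ ((neg a ⊹ a) ⊹ (e ⊹ (neg a ⊹ a))) := by simp only [addA]
      _ = (a ⍟ e) ⊹ ((neg a ⊹ a) ⊹ ((neg a ⊹ a) ⊹ e)) := by rw [idem_add_comm he hf]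
      _ = (a ⍟ e) ⊹ (((neg a ⊹ a) ⊹ (neg a ⊹ a)) ⊹ e) := by
          rw [addA (neg a ⊹ a) (neg a ⊹ a) e]
      _ = (a ⍟ e) ⊹ ((neg a ⊹ a) ⊹ e) := by rw [hf]
      _ = a ⍟ e := hX
  have hfu : (neg a ⊹ a) ⊹ (a ⍟ e) = a ⍟ e := by
    rw [add_central hf (a ⍟ e)]
    exact huf
  have hkey : a ⊹ (neg a ⊹ (a ⍟ e)) = a ⍟ e := by
    rw [← addA, plus_clifford, hfu]
  rw [hlam] at hkey
  rw [← addA, ← addA, WeakBrace.add_reg] at hkey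
  exact hkey.symm


theorem idem_add_idem {e f : S} (he : e ⊹ e = e) (hf : f ⊹ f = f) :
    (f ⊹ e) ⊹ (f ⊹ e) = f ⊹ e := by
  calc (f ⊹ e) ⊹ (f ⊹ e) = f ⊹ ((e ⊹ f) ⊹ e) := by simp only [addA]
    _ = f ⊹ ((f ⊹ e) ⊹ e) := by rw [idem_add_comm he hf]
    _ = (f ⊹ f) ⊹ (e ⊹ e) := by simp only [addA]
    _ = f ⊹ e := by rw [he, hf]

end DWBAux

open WeakBrace
theorem stmt3 {S : Type*} [DualWeakBrace S] (a e : S) (he : IsIdem e) :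
    cdot a e = cdot e a ∧ IsIdem (cdot a e) := by
  have he' : WeakBrace.add e e = e := he
  have hne : WeakBrace.neg e = e := DWBAux.idem_neg he'
  have hee : WeakBrace.mul e e = e := DWBAux.idem_bridge he'
  have hf := DWBAux.pi_idem' a
  have h1 : WeakBrace.mul a e = WeakBrace.add a e := DWBAux.mul_idem_eq_add he' a
  have h2 : WeakBrace.mul e a = WeakBrace.add a e := by
    rw [← DWBAux.mul_central hee a]; exact h1
  have hae : cdot a e = WeakBrace.add (WeakBrace.add (WeakBrace.neg a) a) e := by
    show WeakBrace.add (WeakBrace.add (WeakBrace.neg a) (WeakBrace.mul a e)) (WeakBrace.neg e)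
        = WeakBrace.add (WeakBrace.add (WeakBrace.neg a) a) e
    rw [h1, hne, ← WeakBrace.add_assoc, WeakBrace.add_assoc _ e e, he']
  have hea : cdot e a = WeakBrace.add (WeakBrace.add (WeakBrace.neg a) a) e := by
    show WeakBrace.add (WeakBrace.add (WeakBrace.neg e) (WeakBrace.mul e a)) (WeakBrace.neg a)
        = WeakBrace.add (WeakBrace.add (WeakBrace.neg a) a) e
    rw [h2, hne, ← DWBAux.add_central he' a, ← WeakBrace.add_assoc e e a, he',
      WeakBrace.add_assoc, DWBAux.plus_clifford a, DWBAux.idem_add_comm he' hf]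
  constructor
  · rw [hae, hea]
  · show WeakBrace.add (cdot a e) (cdot a e) = cdot a e
    rw [hae]
    exact DWBAux.idem_add_idem he' hf
end

section
/- In a dual weak brace S, for all a, b, c ∈ S, a · (b + c) = a · b + b + a · c - b, where a · b := -a + a ∘ b - b. -/
namespace DWBaux
variable {S : Type*}

section Gen
variable {op : S → S → S} {i : S → S}

lemma idem_self_inv (hU : ∀ a x : S, op (op a x) a = a → op (op x a) x = x → x = i a)
    {e : S} (he : op e e = e) : i e = e :=
  (hU e e (by rw [he, he]) (by rw [he, he])).symm

section
variable (hA : ∀ a b c : S, op (op a b) c = op a (op b c))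
variable (hR : ∀ a : S, op (op a (i a)) a = a)
variable (hIR : ∀ a : S, op (op (i a) a) (i a) = i a)
variable (hU : ∀ a x : S, op (op a x) a = a → op (op x a) x = x → x = i a)
include hA hR hIR hU

lemma idem_op {e f : S} (he : op e e = e) (hf : op f f = f) :
    op (op e f) (op e f) = op e f := by
  set p := op e f with hp
  set x := i p with hx
  have ce : ∀ z, op e (op e z) = op e z := fun z => by rw [← hA, he]
  have cf : ∀ z, op f (op f z) = op f z := fun z => by rw [← hA, hf]
  have hR' : op p (op x p) = p := by rw [← hA]; exact hR p
  have hIR' : op x (op p x) = x := by rw [← hA]; exact hIR p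
  have h2 : op x (op e (op f x)) = x := by
    have h := hIR'
    rw [hp, hA] at h; exact h
  have core : op x (op e (op f (op x e))) = op x e := by
    calc op x (op e (op f (op x e))) = op (op x (op e (op f x))) e := by simp only [hA]
      _ = op x e := by rw [h2]
  have hq : op (op f x) e = x := by
    refine hU p (op (op f x) e) ?_ ?_
    · calc op (op p (op (op f x) e)) p
          = op e (op f (op f (op x (op e (op e f))))) := by simp only [hp, hA]
        _ = op e (op f (op x (op e f))) := by rw [cf, ce]
        _ = op p (op x p) := by simp only [hp, hA]
        _ = p := hR'
    · calc op (op (op (op f x) e) p) (op (op f x) e)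
          = op f (op x (op e (op e (op f (op f (op x e)))))) := by simp only [hp, hA]
        _ = op f (op x (op e (op f (op x e)))) := by rw [ce, cf]
        _ = op f (op x e) := by rw [core]
        _ = op (op f x) e := (hA _ _ _).symm
  have hxx : op x x = x := by
    rw [← hq]
    calc op (op (op f x) e) (op (op f x) e)
        = op f (op x (op e (op f (op x e)))) := by simp only [hA]
      _ = op f (op x e) := by rw [core]
      _ = op (op f x) e := (hA _ _ _).symm
  have hpx : p = x := by
    have h1 : p = i x := hU x p (hIR p) (hR p)
    rw [h1, idem_self_inv hU hxx]
  rw [hpx]; exact hxx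

lemma idem_op_i {e f : S} (he : op e e = e) (hf : op f f = f) : i (op e f) = op e f :=
  idem_self_inv hU (idem_op hA hR hIR hU he hf)

lemma idem_comm {e f : S} (he : op e e = e) (hf : op f f = f) : op e f = op f e := by
  have pef := idem_op hA hR hIR hU he hf
  have pfe := idem_op hA hR hIR hU hf he
  have ce : ∀ z, op e (op e z) = op e z := fun z => by rw [← hA, he]
  have cf : ∀ z, op f (op f z) = op f z := fun z => by rw [← hA, hf]
  have h1 : op f e = i (op e f) := by
    refine hU (op e f) (op f e) ?_ ?_
    · calc op (op (op e f) (op f e)) (op e f)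
          = op e (op f (op f (op e (op e f)))) := by simp only [hA]
        _ = op e (op f (op e f)) := by rw [cf, ce]
        _ = op (op e f) (op e f) := by simp only [hA]
        _ = op e f := pef
    · calc op (op (op f e) (op e f)) (op f e)
          = op f (op e (op e (op f (op f e)))) := by simp only [hA]
        _ = op f (op e (op f e)) := by rw [ce, cf]
        _ = op (op f e) (op f e) := by simp only [hA]
        _ = op f e := pfe
  rw [h1, idem_op_i hA hR hIR hU he hf]

end

lemma xi_idem (hA : ∀ a b c : S, op (op a b) c = op a (op b c))
    (hIR : ∀ a : S, op (op (i a) a) (i a) = i a) (x : S) :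
    op (op x (i x)) (op x (i x)) = op x (i x) := by
  calc op (op x (i x)) (op x (i x)) = op x (op (op (i x) x) (i x)) := by simp only [hA]
    _ = op x (i x) := by rw [hIR]

lemma ix_idem (hA : ∀ a b c : S, op (op a b) c = op a (op b c))
    (hR : ∀ a : S, op (op a (i a)) a = a) (x : S) :
    op (op (i x) x) (op (i x) x) = op (i x) x := by
  calc op (op (i x) x) (op (i x) x) = op (i x) (op (op x (i x)) x) := by simp only [hA]
    _ = op (i x) x := by rw [hR]

section
variable (hA : ∀ a b c : S, op (op a b) c = op a (op b c))
variable (hR : ∀ a : S, op (op a (i a)) a = a)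
variable (hIR : ∀ a : S, op (op (i a) a) (i a) = i a)
variable (hU : ∀ a x : S, op (op a x) a = a → op (op x a) x = x → x = i a)
include hA hR hIR hU

lemma i_op (a b : S) : i (op a b) = op (i b) (i a) := by
  have e1 := xi_idem hA hIR b
  have e2 := ix_idem hA hR a
  have hcomm := idem_comm hA hR hIR hU e1 e2
  refine (hU (op a b) (op (i b) (i a)) ?_ ?_).symm
  · calc op (op (op a b) (op (i b) (i a))) (op a b)
        = op a (op (op (op b (i b)) (op (i a) a)) b) := by simp only [hA]
      _ = op a (op (op (op (i a) a) (op b (i b))) b) := by rw [hcomm]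
      _ = op (op (op a (i a)) a) (op (op b (i b)) b) := by simp only [hA]
      _ = op a b := by rw [hR, hR]
  · calc op (op (op (i b) (i a)) (op a b)) (op (i b) (i a))
        = op (i b) (op (op (op (i a) a) (op b (i b))) (i a)) := by simp only [hA]
      _ = op (i b) (op (op (op b (i b)) (op (i a) a)) (i a)) := by rw [← hcomm]
      _ = op (op (op (i b) b) (i b)) (op (op (i a) a) (i a)) := by simp only [hA]
      _ = op (i b) (i a) := by rw [hIR, hIR]

lemma central (hC : ∀ a : S, op a (i a) = op (i a) a) {e : S} (he : op e e = e) (x : S) :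
    op e x = op x e := by
  have hie : i e = e := idem_self_inv hU he
  have hxix := xi_idem hA hIR x
  have hcomm := idem_comm hA hR hIR hU he hxix
  have hB : op (i x) (op e x) = op (op x (i x)) e := by
    have h0 := hC (op e x)
    rw [i_op hA hR hIR hU e x, hie] at h0
    have hL : op (op e x) (op (i x) e) = op (op x (i x)) e := by
      calc op (op e x) (op (i x) e) = op (op e (op x (i x))) e := by simp only [hA]
        _ = op (op (op x (i x)) e) e := by rw [hcomm]
        _ = op (op x (i x)) (op e e) := hA _ _ _
        _ = op (op x (i x)) e := by rw [he]
    have hRt : op (op (i x) e) (op e x) = op (i x) (op e x) := by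
      calc op (op (i x) e) (op e x) = op (i x) (op (op e e) x) := by simp only [hA]
        _ = op (i x) (op e x) := by rw [he]
    rw [hL, hRt] at h0; exact h0.symm
  calc op e x = op e (op (op x (i x)) x) := by rw [hR x]
    _ = op (op e (op x (i x))) x := (hA _ _ _).symm
    _ = op (op (op x (i x)) e) x := by rw [hcomm]
    _ = op (op x (i x)) (op e x) := hA _ _ _
    _ = op x (op (i x) (op e x)) := hA _ _ _
    _ = op x (op (op x (i x)) e) := by rw [hB]
    _ = op (op x (op x (i x))) e := (hA _ _ _).symm
    _ = op (op x (op (i x) x)) e := by rw [hC x]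
    _ = op (op (op x (i x)) x) e := by simp only [hA]
    _ = op x e := by rw [hR]

end
end Gen
end DWBaux
namespace DWBaux
section Brace
variable {S : Type*} [DualWeakBrace S]

lemma negAdd (a b : S) :
    WeakBrace.neg (WeakBrace.add a b) = WeakBrace.add (WeakBrace.neg b) (WeakBrace.neg a) :=
  i_op WeakBrace.add_assoc WeakBrace.add_reg WeakBrace.neg_reg WeakBrace.neg_unique a b

lemma negIdem {e : S} (he : WeakBrace.add e e = e) : WeakBrace.neg e = e :=
  idem_self_inv WeakBrace.neg_unique he

lemma addIdem_of_mulIdem {w : S} (hw : WeakBrace.mul w w = w) : WeakBrace.add w w = w := by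
  have hiw : WeakBrace.inv w = w := idem_self_inv WeakBrace.inv_unique hw
  have hl := WeakBrace.link w
  rw [hiw, hw] at hl
  nth_rewrite 2 [hl]
  rw [← WeakBrace.add_assoc, WeakBrace.add_reg]

lemma mulCentral {e : S} (he : WeakBrace.mul e e = e) (x : S) :
    WeakBrace.mul e x = WeakBrace.mul x e :=
  central WeakBrace.mul_assoc WeakBrace.mul_reg WeakBrace.inv_reg WeakBrace.inv_unique
    DualWeakBrace.clifford he x

lemma keyE {e g : S} (he : WeakBrace.mul e e = e) (hg : WeakBrace.mul g g = g) :
    WeakBrace.add (WeakBrace.mul e g) e = WeakBrace.mul e g := by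
  have hge : WeakBrace.add g g = g := addIdem_of_mulIdem hg
  have hea : WeakBrace.add e e = e := addIdem_of_mulIdem he
  have hne : WeakBrace.neg e = e := negIdem hea
  have hwm : WeakBrace.mul (WeakBrace.mul e g) (WeakBrace.mul e g) = WeakBrace.mul e g := by
    calc WeakBrace.mul (WeakBrace.mul e g) (WeakBrace.mul e g)
        = WeakBrace.mul e (WeakBrace.mul (WeakBrace.mul g e) g) := by
          simp only [WeakBrace.mul_assoc]
      _ = WeakBrace.mul e (WeakBrace.mul (WeakBrace.mul e g) g) := by rw [← mulCentral he g]
      _ = WeakBrace.mul (WeakBrace.mul e e) (WeakBrace.mul g g) := by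
          simp only [WeakBrace.mul_assoc]
      _ = WeakBrace.mul e g := by rw [he, hg]
  have hwa := addIdem_of_mulIdem hwm
  have hcomm : WeakBrace.add e (WeakBrace.mul e g) = WeakBrace.add (WeakBrace.mul e g) e :=
    idem_comm WeakBrace.add_assoc WeakBrace.add_reg WeakBrace.neg_reg WeakBrace.neg_unique hea hwa
  have hD : WeakBrace.mul e g
      = WeakBrace.add (WeakBrace.add (WeakBrace.mul e g) e) (WeakBrace.mul e g) := by
    have h0 := WeakBrace.distrib e g g
    rw [hge, hne] at h0; exact h0
  calc WeakBrace.add (WeakBrace.mul e g) e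
      = WeakBrace.add (WeakBrace.add (WeakBrace.mul e g) (WeakBrace.mul e g)) e := by rw [hwa]
    _ = WeakBrace.add (WeakBrace.mul e g) (WeakBrace.add (WeakBrace.mul e g) e) :=
        WeakBrace.add_assoc _ _ _
    _ = WeakBrace.add (WeakBrace.mul e g) (WeakBrace.add e (WeakBrace.mul e g)) := by rw [← hcomm]
    _ = WeakBrace.add (WeakBrace.add (WeakBrace.mul e g) e) (WeakBrace.mul e g) :=
        (WeakBrace.add_assoc _ _ _).symm
    _ = WeakBrace.mul e g := hD.symm

lemma key (a b : S) :
    WeakBrace.add (WeakBrace.mul a b) (WeakBrace.add (WeakBrace.neg b) b) = WeakBrace.mul a b := by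
  have hE : WeakBrace.add (WeakBrace.neg b) b = WeakBrace.mul b (WeakBrace.inv b) :=
    (WeakBrace.link b).symm
  have heidem := xi_idem WeakBrace.mul_assoc WeakBrace.inv_reg b
  have hgidem := xi_idem WeakBrace.mul_assoc WeakBrace.inv_reg a
  have hf : WeakBrace.add (WeakBrace.neg (WeakBrace.mul a b)) (WeakBrace.mul a b)
      = WeakBrace.mul (WeakBrace.mul b (WeakBrace.inv b)) (WeakBrace.mul a (WeakBrace.inv a)) := by
    have h0 := (WeakBrace.link (WeakBrace.mul a b)).symm
    rw [i_op WeakBrace.mul_assoc WeakBrace.mul_reg WeakBrace.inv_reg WeakBrace.inv_unique a b] at h0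
    rw [h0]
    calc WeakBrace.mul (WeakBrace.mul a b) (WeakBrace.mul (WeakBrace.inv b) (WeakBrace.inv a))
        = WeakBrace.mul a (WeakBrace.mul (WeakBrace.mul b (WeakBrace.inv b)) (WeakBrace.inv a)) := by
          simp only [WeakBrace.mul_assoc]
      _ = WeakBrace.mul a (WeakBrace.mul (WeakBrace.inv a) (WeakBrace.mul b (WeakBrace.inv b))) := by
          rw [mulCentral heidem (WeakBrace.inv a)]
      _ = WeakBrace.mul (WeakBrace.mul a (WeakBrace.inv a)) (WeakBrace.mul b (WeakBrace.inv b)) :=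
          (WeakBrace.mul_assoc _ _ _).symm
      _ = WeakBrace.mul (WeakBrace.mul b (WeakBrace.inv b)) (WeakBrace.mul a (WeakBrace.inv a)) :=
          mulCentral hgidem _
  have hfe : WeakBrace.add
      (WeakBrace.add (WeakBrace.neg (WeakBrace.mul a b)) (WeakBrace.mul a b))
      (WeakBrace.add (WeakBrace.neg b) b)
      = WeakBrace.add (WeakBrace.neg (WeakBrace.mul a b)) (WeakBrace.mul a b) := by
    rw [hE, hf]; exact keyE heidem hgidem
  calc WeakBrace.add (WeakBrace.mul a b) (WeakBrace.add (WeakBrace.neg b) b)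
      = WeakBrace.add (WeakBrace.add (WeakBrace.add (WeakBrace.mul a b)
          (WeakBrace.neg (WeakBrace.mul a b))) (WeakBrace.mul a b))
          (WeakBrace.add (WeakBrace.neg b) b) := by rw [WeakBrace.add_reg]
    _ = WeakBrace.add (WeakBrace.mul a b) (WeakBrace.add
          (WeakBrace.add (WeakBrace.neg (WeakBrace.mul a b)) (WeakBrace.mul a b))
          (WeakBrace.add (WeakBrace.neg b) b)) := by simp only [WeakBrace.add_assoc]
    _ = WeakBrace.add (WeakBrace.mul a b)
          (WeakBrace.add (WeakBrace.neg (WeakBrace.mul a b)) (WeakBrace.mul a b)) := by rw [hfe]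
    _ = WeakBrace.add (WeakBrace.add (WeakBrace.mul a b) (WeakBrace.neg (WeakBrace.mul a b)))
          (WeakBrace.mul a b) := (WeakBrace.add_assoc _ _ _).symm
    _ = WeakBrace.mul a b := WeakBrace.add_reg _

end Brace
end DWBaux

open WeakBrace
theorem stmt5 {S : Type*} [DualWeakBrace S] (a b c : S) :
    cdot a (add b c) = add (add (add (cdot a b) b) (cdot a c)) (neg b) := by
  have key' : ∀ y : S, add (mul a b) (add (neg b) (add b y)) = add (mul a b) y := by
    intro y
    calc add (mul a b) (add (neg b) (add b y))
        = add (add (mul a b) (add (neg b) b)) y := by simp only [WeakBrace.add_assoc]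
      _ = add (mul a b) y := by rw [DWBaux.key a b]
  simp only [WeakBrace.cdot]
  rw [WeakBrace.distrib, DWBaux.negAdd]
  simp only [WeakBrace.add_assoc]
  rw [key']
end
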